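/- Let S be a Seidel matrix of odd order n with exactly three distinct eigenvalues. Then S has two distinct eigenvalues λ and μ such that the matrix ±(S−λI)(S−μI) (with sign chosen so it is positive semidefinite) is switching equivalent to |n−1+λμ|·J. -/

import Mathlib

open Polynomial Matrix



def IsSeidel {n : ℕ} (S : Matrix (Fin n) (Fin n) ℝ) : Prop :=
  S.IsSymm ∧ (∀ i, S i i = 0) ∧ ∀ i j, i ≠ j → S i j = 1 ∨ S i j = -1

/-- The all-ones matrix. -/
def JmatR (n : ℕ) : Matrix (Fin n) (Fin n) ℝ := Matrix.of fun _ _ => 1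

/-- A signed permutation matrix built from a sign function `d` and a permutation `σ`. -/
def signedPerm {n : ℕ} (d : Fin n → ℝ) (σ : Equiv.Perm (Fin n)) : Matrix (Fin n) (Fin n) ℝ :=
  Matrix.of fun i j => if j = σ i then d i else 0

/-- Switching equivalence: `X = Pᵀ Y P` for a signed permutation matrix `P`. -/
def SwitchEquiv {n : ℕ} (X Y : Matrix (Fin n) (Fin n) ℝ) : Prop :=
  ∃ (d : Fin n → ℝ) (σ : Equiv.Perm (Fin n)), (∀ i, d i = 1 ∨ d i = -1) ∧
    X = Matrix.transpose (signedPerm d σ) * Y * signedPerm d σ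



private lemma rootMult_pow_mul {R : Type*} [CommRing R] [IsDomain R] (f r : R[X])
    (hf : f ≠ 0) (hr : r ≠ 0) (x : R) (e : ℕ) :
    (f ^ e * r).rootMultiplicity x = e * f.rootMultiplicity x + r.rootMultiplicity x := by
  induction e with
  | zero => simp
  | succ e ih =>
      have h1 : f ^ e * r ≠ 0 := mul_ne_zero (pow_ne_zero _ hf) hr
      have : f ^ (e+1) * r = f * (f ^ e * r) := by ring
      rw [this, rootMultiplicity_mul (mul_ne_zero hf h1), ih]
      ring

private lemma exists_pow_factor {f : ℤ[X]} (hf : f.Monic) (hfd : 0 < f.natDegree) :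
    ∀ (k : ℕ) (q : ℤ[X]), q.natDegree ≤ k → q.Monic →
      ∃ (e : ℕ) (r : ℤ[X]), r.Monic ∧ q = f ^ e * r ∧ ¬ f ∣ r := by
  intro k
  induction k with
  | zero =>
      intro q hdeg hq
      refine ⟨0, q, hq, by simp, ?_⟩
      intro hdvd
      obtain ⟨q₁, rfl⟩ := hdvd
      have hq₁ : q₁.Monic := hf.of_mul_monic_left hq
      have := hf.natDegree_mul hq₁
      omega
  | succ k ih =>
      intro q hdeg hq
      by_cases hdvd : f ∣ q
      · obtain ⟨q₁, rfl⟩ := hdvd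
        have hq₁ : q₁.Monic := hf.of_mul_monic_left hq
        have hd := hf.natDegree_mul hq₁
        obtain ⟨e, r, hr, hq₁eq, hfr⟩ := ih q₁ (by omega) hq₁
        exact ⟨e + 1, r, hr, by rw [hq₁eq]; ring, hfr⟩
      · exact ⟨0, q, hq, by simp, hdvd⟩

/-- squarefree implies rootMultiplicity ≤ 1 -/
private lemma rootMult_le_one_of_squarefree {K : Type*} [Field K] {p : K[X]}
    (hp : Squarefree p) (x : K) : p.rootMultiplicity x ≤ 1 := by
  by_contra h
  push_neg at h
  have h2 : (X - C x) * (X - C x) ∣ p := by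
    have := p.pow_rootMultiplicity_dvd x
    calc (X - C x) * (X - C x) = (X - C x) ^ 2 := by ring
    _ ∣ (X - C x) ^ p.rootMultiplicity x := pow_dvd_pow _ h
    _ ∣ p := this
  exact not_isUnit_X_sub_C x (hp _ h2)

private lemma key_lemma :
    ∀ (k : ℕ) (q : ℤ[X]), q.natDegree ≤ k → q.Monic →
    ((q.map (Int.castRingHom ℝ)).Splits) →
    (∀ θ : ℝ, (q.map (Int.castRingHom ℝ)).IsRoot θ →
        (q.map (Int.castRingHom ℝ)).rootMultiplicity θ ≠ 1) →
    (q.map (Int.castRingHom (ZMod 2))).rootMultiplicity 0 ≠ 1 := by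
  intro k
  induction k with
  | zero =>
      intro q hdeg hq _ _
      rw [hq.natDegree_eq_zero.mp (Nat.le_zero.mp hdeg)]
      have : rootMultiplicity (0 : ZMod 2) (Polynomial.map (Int.castRingHom (ZMod 2)) 1) = 0 := by
        apply rootMultiplicity_eq_zero
        simp [IsRoot]
      omega
  | succ k ih =>
      intro q hdeg hq hsplit H2 h1
      have hcast : (Int.castRingHom ℝ) = algebraMap ℤ ℝ := by
        ext1; simp
      have hqR0 : q.map (Int.castRingHom ℝ) ≠ 0 := (hq.map _).ne_zero
      have hq20 : q.map (Int.castRingHom (ZMod 2)) ≠ 0 := (hq.map _).ne_zero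
      -- q is not constant
      have hqdeg : 0 < q.natDegree := by
        rcases Nat.eq_zero_or_pos q.natDegree with h | h
        · rw [hq.natDegree_eq_zero.mp h] at h1
          have : rootMultiplicity (0 : ZMod 2) (Polynomial.map (Int.castRingHom (ZMod 2)) 1) = 0 := by
            apply rootMultiplicity_eq_zero
            simp [IsRoot]
          omega
        · exact h
      -- find a real root
      have hdegR : (q.map (Int.castRingHom ℝ)).degree ≠ 0 := by
        have : 0 < (q.map (Int.castRingHom ℝ)).natDegree := by
          rwa [hq.natDegree_map]
        exact (natDegree_pos_iff_degree_pos.mp this).ne'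
      obtain ⟨θ0, hθ0⟩ := hsplit.exists_eval_eq_zero hdegR
      have haev : Polynomial.aeval θ0 q = 0 := by
        rw [aeval_def, ← eval_map, ← hcast]; exact hθ0
      have hint : IsIntegral ℤ θ0 := ⟨q, hq, haev⟩
      set f := minpoly ℤ θ0 with hfdef
      have hfm : f.Monic := minpoly.monic hint
      have hfdvd : f ∣ q := minpoly.isIntegrallyClosed_dvd hint haev
      have hfdeg : 0 < f.natDegree := minpoly.natDegree_pos hint
      obtain ⟨e, r, hrm, hqeq, hfr⟩ := exists_pow_factor hfm hfdeg (k+1) q hdeg hq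
      have he : 0 < e := by
        rcases Nat.eq_zero_or_pos e with h | h
        · subst h; simp at hqeq; subst hqeq; exact absurd hfdvd hfr
        · exact h
      -- root multiplicity of θ0 in f over ℝ is 1
      have hfint : f.map (algebraMap ℤ ℚ) = minpoly ℚ θ0 :=
        (minpoly.isIntegrallyClosed_eq_field_fractions' ℚ hint).symm
      have hQint : IsIntegral ℚ θ0 := hint.tower_top
      have hsepQ : (minpoly ℚ θ0).Separable :=
        (minpoly.irreducible hQint).separable
      have hmapmap : f.map (Int.castRingHom ℝ) = (minpoly ℚ θ0).map (algebraMap ℚ ℝ) := by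
        rw [← hfint, Polynomial.map_map, hcast, ← IsScalarTower.algebraMap_eq]
      have hsepR : (f.map (Int.castRingHom ℝ)).Separable := by
        rw [hmapmap]; exact hsepQ.map
      have hsqf : Squarefree (f.map (Int.castRingHom ℝ)) := hsepR.squarefree
      have hfR0 : f.map (Int.castRingHom ℝ) ≠ 0 := (hfm.map _).ne_zero
      have hrR0 : r.map (Int.castRingHom ℝ) ≠ 0 := (hrm.map _).ne_zero
      have hfroot : (f.map (Int.castRingHom ℝ)).IsRoot θ0 := by
        rw [IsRoot, eval_map, hcast, ← aeval_def]
        exact minpoly.aeval ℤ θ0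
      have hfmult : (f.map (Int.castRingHom ℝ)).rootMultiplicity θ0 = 1 :=
        le_antisymm (rootMult_le_one_of_squarefree hsqf θ0)
          ((rootMultiplicity_pos hfR0).mpr hfroot)
      -- θ0 is not a root of r
      have hrnotroot : ¬ (r.map (Int.castRingHom ℝ)).IsRoot θ0 := by
        intro hroot
        apply hfr
        apply minpoly.isIntegrallyClosed_dvd hint
        rw [aeval_def, ← eval_map, ← hcast]
        exact hroot
      have hrmult : (r.map (Int.castRingHom ℝ)).rootMultiplicity θ0 = 0 :=
        rootMultiplicity_eq_zero hrnotroot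
      -- multiplicity of θ0 in q over ℝ equals e
      have hqmapR : q.map (Int.castRingHom ℝ) =
          (f.map (Int.castRingHom ℝ)) ^ e * r.map (Int.castRingHom ℝ) := by
        rw [hqeq, Polynomial.map_mul, Polynomial.map_pow]
      have hqmult : (q.map (Int.castRingHom ℝ)).rootMultiplicity θ0 = e := by
        rw [hqmapR, rootMult_pow_mul _ _ hfR0 hrR0, hfmult, hrmult]; ring
      have hqroot : (q.map (Int.castRingHom ℝ)).IsRoot θ0 := hθ0
      have he2 : 2 ≤ e := by
        have := H2 θ0 hqroot
        omega
      -- now mod 2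
      have hf20 : f.map (Int.castRingHom (ZMod 2)) ≠ 0 := (hfm.map _).ne_zero
      have hr20 : r.map (Int.castRingHom (ZMod 2)) ≠ 0 := (hrm.map _).ne_zero
      have hq2eq : q.map (Int.castRingHom (ZMod 2)) =
          (f.map (Int.castRingHom (ZMod 2))) ^ e * r.map (Int.castRingHom (ZMod 2)) := by
        rw [hqeq, Polynomial.map_mul, Polynomial.map_pow]
      rw [hq2eq, rootMult_pow_mul _ _ hf20 hr20] at h1
      have hr2mult : (r.map (Int.castRingHom (ZMod 2))).rootMultiplicity 0 = 1 := by
        rcases Nat.eq_zero_or_pos ((f.map (Int.castRingHom (ZMod 2))).rootMultiplicity 0)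
          with h | h
        · rw [h] at h1; omega
        · nlinarith
      -- apply the inductive hypothesis to r
      have hrdeg : r.natDegree ≤ k := by
        have h := (hfm.pow e).natDegree_mul hrm
        rw [← hqeq] at h
        have h2 : (f ^ e).natDegree = e * f.natDegree := hfm.natDegree_pow e
        rw [h2] at h
        nlinarith
      have hrsplit : (r.map (Int.castRingHom ℝ)).Splits := by
        apply hsplit.of_dvd hqR0
        rw [hqmapR]
        exact Dvd.intro_left _ rfl
      refine ih r hrdeg hrm hrsplit ?_ hr2mult
      intro θ hθroot
      -- θ is not a root of f over ℝ
      have hθnotf : ¬ (f.map (Int.castRingHom ℝ)).IsRoot θ := by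
        intro hθf
        apply hfr
        have hθint : IsIntegral ℚ θ := by
          refine ⟨f.map (algebraMap ℤ ℚ), hfm.map _, ?_⟩
          rw [← aeval_def, aeval_map_algebraMap, aeval_def, ← eval_map, ← hcast]
          exact hθf
        have hgf : minpoly ℚ θ ∣ f.map (algebraMap ℤ ℚ) := by
          apply minpoly.dvd
          rw [aeval_map_algebraMap, aeval_def, ← eval_map, ← hcast]
          exact hθf
        have hfirr : Irreducible (f.map (algebraMap ℤ ℚ)) := by
          rw [hfint]; exact minpoly.irreducible hQint
        have hassoc : Associated (minpoly ℚ θ) (f.map (algebraMap ℤ ℚ)) :=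
          (minpoly.irreducible hθint).associated_of_dvd hfirr hgf
        have hfeq : f.map (algebraMap ℤ ℚ) = minpoly ℚ θ :=
          (eq_of_monic_of_associated (minpoly.monic hθint) (hfm.map _) hassoc).symm
        have hdvdr : f.map (algebraMap ℤ ℚ) ∣ r.map (algebraMap ℤ ℚ) := by
          rw [hfeq]
          apply minpoly.dvd
          rw [aeval_map_algebraMap, aeval_def, ← eval_map, ← hcast]
          exact hθroot
        have hcastQ : (algebraMap ℤ ℚ) = Int.castRingHom ℚ := by ext1; simp
        rw [hcastQ, map_dvd_map (Int.castRingHom ℚ) Int.cast_injective hfm] at hdvdr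
        exact hdvdr
      have hθq : (q.map (Int.castRingHom ℝ)).IsRoot θ :=
        hθroot.dvd ⟨(f.map (Int.castRingHom ℝ)) ^ e, by rw [hqmapR]; ring⟩
      have := H2 θ hθq
      rw [hqmapR, rootMult_pow_mul _ _ hfR0 hrR0,
        rootMultiplicity_eq_zero hθnotf] at this
      omega


set_option synthInstance.maxHeartbeats 1000000 in
set_option maxHeartbeats 1000000 in
private lemma charpoly_one_add_J {n : ℕ} (hn : Odd n) :
    (1 + Matrix.of (fun _ _ => (1 : ZMod 2)) : Matrix (Fin n) (Fin n) (ZMod 2)).charpoly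
      = X * (X + 1) ^ (n - 1) := by
  obtain ⟨m, hm⟩ := hn
  have hn1 : n = (n - 1) + 1 := by omega
  have h2 : (1 + 1 : (ZMod 2)[X]) = 0 := by
    rw [← C_1, ← C_add, show ((1:ZMod 2)+1) = 0 by decide, C_0]
  set B : Matrix (Fin n) (Fin n) (ZMod 2) := 1 + Matrix.of (fun _ _ => (1 : ZMod 2)) with hB
  set φ : (ZMod 2)[X] →+* RatFunc (ZMod 2) :=
    (algebraMap ((ZMod 2)[X]) (RatFunc (ZMod 2))) with hφ
  have hinj : Function.Injective φ := IsFractionRing.injective _ _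
  have h2F : (1 + 1 : RatFunc (ZMod 2)) = 0 := by
    have h : ((1: RatFunc (ZMod 2)) + 1) = φ (1 + 1) := by simp
    rw [h, h2, map_zero]
  have hb0 : (X + 1 : (ZMod 2)[X]) ≠ 0 := by
    have h : (X + 1 : (ZMod 2)[X]).Monic := by
      simpa using monic_X_add_C (1 : ZMod 2)
    exact h.ne_zero
  have hb : φ (X + 1) ≠ 0 := fun h => hb0 (hinj (by rw [h, map_zero]))
  have hbX : φ (X + 1) + 1 = φ X := by
    rw [← _root_.map_one φ, ← map_add, add_assoc, h2, add_zero]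
  apply hinj
  rw [Matrix.charpoly, RingHom.map_det, RingHom.mapMatrix_apply]
  have hchar : (charmatrix B).map φ =
      φ (X + 1) • (1 + Matrix.replicateCol Unit (fun _ => (φ (X + 1))⁻¹) *
        Matrix.replicateRow Unit (fun _ => (1 : RatFunc (ZMod 2)))) := by
    ext i j
    rw [Matrix.map_apply, Matrix.smul_apply, Matrix.add_apply, Matrix.mul_apply]
    rw [Finset.univ_unique, Finset.sum_singleton]
    by_cases hij : i = j
    · subst hij
      rw [charmatrix_apply_eq, Matrix.one_apply_eq]
      have h : B i i = 0 := by
        rw [hB]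
        simp only [Matrix.add_apply, Matrix.one_apply_eq, Matrix.of_apply]
        decide
      rw [h, map_zero, sub_zero]
      simp only [Matrix.replicateCol_apply, Matrix.replicateRow_apply]
      rw [smul_eq_mul, mul_add, mul_one, mul_one, mul_inv_cancel₀ hb, hbX]
    · rw [charmatrix_apply_ne _ _ _ hij, Matrix.one_apply_ne hij]
      have h : B i j = 1 := by
        rw [hB]
        simp [Matrix.one_apply_ne hij]
      rw [h]
      have hneg : (-C 1 : (ZMod 2)[X]) = 1 := by
        rw [C_1, neg_eq_iff_add_eq_zero, h2]
      rw [hneg, _root_.map_one]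
      simp only [Matrix.replicateCol_apply, Matrix.replicateRow_apply]
      rw [zero_add, mul_one, smul_eq_mul, mul_inv_cancel₀ hb]
  rw [hchar, Matrix.det_smul, det_one_add_replicateCol_mul_replicateRow]
  have hdot : (fun _ : Fin n => (1:RatFunc (ZMod 2))) ⬝ᵥ (fun _ => (φ (X + 1))⁻¹)
      = (n : RatFunc (ZMod 2)) * (φ (X + 1))⁻¹ := by
    simp [dotProduct, Finset.sum_const, nsmul_eq_mul]
  have hnF : (n : RatFunc (ZMod 2)) = 1 := by
    rw [hm]
    push_cast
    have h : (2 : RatFunc (ZMod 2)) = 0 := by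
      rw [show (2:RatFunc (ZMod 2)) = 1 + 1 by norm_num, h2F]
    rw [h]
    ring
  obtain ⟨k, hk⟩ : ∃ k, n = k + 1 := ⟨n - 1, by omega⟩
  subst hk
  rw [hdot, hnF, one_mul, Fintype.card_fin]
  rw [_root_.map_mul, _root_.map_pow, Nat.add_sub_cancel]
  calc φ (X+1) ^ (k+1) * (1 + (φ (X+1))⁻¹)
      = φ (X+1) ^ (k+1) + φ (X+1) ^ (k+1) * (φ (X+1))⁻¹ := by ring
    _ = φ (X+1) ^ (k+1) + φ (X+1) ^ k := by
        rw [pow_succ, mul_assoc, mul_inv_cancel₀ hb, mul_one]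
    _ = (φ (X+1) + 1) * φ (X+1) ^ k := by rw [pow_succ]; ring
    _ = φ X * φ (X+1) ^ k := by rw [hbX]


private lemma charpoly_diagonal' {R : Type*} [CommRing R] {n : ℕ} (d : Fin n → R) :
    (Matrix.diagonal d).charpoly = ∏ i, (X - C (d i)) := by
  have h : charmatrix (Matrix.diagonal d) = Matrix.diagonal (fun i => (X : R[X]) - C (d i)) := by
    ext i j
    by_cases hij : i = j
    · subst hij; simp [charmatrix_apply_eq]
    · simp [charmatrix_apply_ne _ _ _ hij, Matrix.diagonal_apply_ne _ hij,
        Matrix.diagonal_apply_ne' _ (Ne.symm hij)]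
  rw [Matrix.charpoly, h, Matrix.det_diagonal]

private lemma charpoly_conj' {n : ℕ} {R : Type*} [CommRing R] (U V A : Matrix (Fin n) (Fin n) R)
    (h1 : U * V = 1) (h2 : V * U = 1) :
    (U * A * V).charpoly = A.charpoly := by
  have hC : ∀ (M N : Matrix (Fin n) (Fin n) R),
      (C : R →+* R[X]).mapMatrix (M * N) = (C : R →+* R[X]).mapMatrix M *
        (C : R →+* R[X]).mapMatrix N := fun M N => by simp
  set U' := (C : R →+* R[X]).mapMatrix U with hU'
  set V' := (C : R →+* R[X]).mapMatrix V with hV'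
  have hUV : U' * V' = 1 := by rw [hU', hV', ← hC, h1]; simp
  have hch : charmatrix (U * A * V) = U' * charmatrix A * V' := by
    rw [charmatrix, charmatrix, Matrix.mul_sub, Matrix.sub_mul]
    congr 1
    · have hcomm : Commute (Matrix.scalar (Fin n) (X : R[X])) U' :=
        (Matrix.scalar_commute _ (fun r' => Commute.all _ _) _)
      rw [← hcomm.eq, Matrix.mul_assoc, hUV, Matrix.mul_one]
    · rw [hC, hC]
  rw [Matrix.charpoly, Matrix.charpoly, hch, Matrix.det_mul, Matrix.det_mul]
  have h3 : U'.det * (charmatrix A).det * V'.det =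
      (charmatrix A).det * (U'.det * V'.det) := by ring
  rw [h3, ← Matrix.det_mul, hUV, Matrix.det_one, mul_one]

private lemma charpoly_eq_prod {n : ℕ} (S : Matrix (Fin n) (Fin n) ℝ) (hH : S.IsHermitian) :
    S.charpoly = ∏ i, (X - C (hH.eigenvalues i)) := by
  have hof : (RCLike.ofReal ∘ hH.eigenvalues : Fin n → ℝ) = hH.eigenvalues := by
    rw [RCLike.ofReal_real_eq_id]; rfl
  have hst := hH.spectral_theorem
  rw [hof] at hst
  have hU1 : (hH.eigenvectorUnitary : Matrix (Fin n) (Fin n) ℝ) *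
      star (hH.eigenvectorUnitary : Matrix (Fin n) (Fin n) ℝ) = 1 :=
    Matrix.mem_unitaryGroup_iff.mp (hH.eigenvectorUnitary).2
  have hU2 : star (hH.eigenvectorUnitary : Matrix (Fin n) (Fin n) ℝ) *
      (hH.eigenvectorUnitary : Matrix (Fin n) (Fin n) ℝ) = 1 :=
    Matrix.mem_unitaryGroup_iff'.mp (hH.eigenvectorUnitary).2
  conv_lhs => rw [hst, Unitary.conjStarAlgAut_apply]
  rw [charpoly_conj' _ _ _ hU1 hU2, charpoly_diagonal']

private lemma rootMult_prod {n : ℕ} (v : Fin n → ℝ) (θ : ℝ) :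
    (∏ i, (X - C (v i))).rootMultiplicity θ
      = (Finset.univ.filter (fun i => v i = θ)).card := by
  have h1 : (∏ i, (X - C (v i)))
      = ((Finset.univ.val.map v).map (fun a => (X : ℝ[X]) - C a)).prod := by
    rw [Multiset.map_map, Finset.prod_eq_multiset_prod]
    rfl
  rw [← count_roots, h1, roots_multiset_prod_X_sub_C, Multiset.count_map]
  have h2 : (Finset.univ.filter (fun i => v i = θ)).card
      = Multiset.card (Finset.univ.val.filter (fun i => v i = θ)) := rfl
  rw [h2]
  congr 1
  apply Multiset.filter_congr
  intro a _
  exact ⟨Eq.symm, Eq.symm⟩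

theorem seidel_odd_three_ev_M_form {n : ℕ} (hn : Odd n)
    (S : Matrix (Fin n) (Fin n) ℝ) (hS : IsSeidel S) (hH : S.IsHermitian)
    (h3 : (Finset.univ.image hH.eigenvalues).card = 3) :
    ∃ lam mu : ℝ, lam ≠ mu ∧
      lam ∈ Finset.univ.image hH.eigenvalues ∧ mu ∈ Finset.univ.image hH.eigenvalues ∧
      ∃ ε : ℝ, (ε = 1 ∨ ε = -1) ∧
        (ε • ((S - lam • 1) * (S - mu • 1))).PosSemidef ∧
        SwitchEquiv (ε • ((S - lam • 1) * (S - mu • 1)))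
          (|(n : ℝ) - 1 + lam * mu| • JmatR n) := by
  classical
  have hn1 : 1 ≤ n := hn.pos
  set ev : Fin n → ℝ := hH.eigenvalues with hev
  -- the integer Seidel matrix
  set T : Matrix (Fin n) (Fin n) ℤ :=
    Matrix.of (fun i j => if i = j then 0 else if S i j = 1 then 1 else -1) with hT
  have hTS : T.map ⇑(Int.castRingHom ℝ) = S := by
    ext i j
    by_cases hij : i = j
    · subst hij
      simp [hT, Matrix.map_apply, (hS.2.1 i)]
    · rcases hS.2.2 i j hij with h | h
      · simp [hT, Matrix.map_apply, hij, h]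
      · rw [hT]
        simp only [Matrix.map_apply, Matrix.of_apply, if_neg hij]
        rw [if_neg (by rw [h]; norm_num), h]
        norm_num
  -- charpoly of T over ℝ
  have hpR : T.charpoly.map (Int.castRingHom ℝ) = S.charpoly := by
    rw [← Matrix.charpoly_map, hTS]
  have hps : S.charpoly = ∏ i, (X - C (ev i)) := charpoly_eq_prod S hH
  -- charpoly of T mod 2
  have hT2 : T.map ⇑(Int.castRingHom (ZMod 2)) = 1 + Matrix.of (fun _ _ => (1 : ZMod 2)) := by
    ext i j
    by_cases hij : i = j
    · subst hij
      simp [hT, Matrix.map_apply, Matrix.one_apply_eq]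
      decide
    · have hval : T i j = 1 ∨ T i j = -1 := by
        rw [hT]
        simp only [Matrix.of_apply, if_neg hij]
        rcases hS.2.2 i j hij with h | h
        · left; rw [if_pos h]
        · right; rw [if_neg (by rw [h]; norm_num)]
      rw [Matrix.map_apply, Matrix.add_apply, Matrix.one_apply_ne hij, Matrix.of_apply]
      rcases hval with h | h <;> rw [h] <;> decide
  have hp2 : T.charpoly.map (Int.castRingHom (ZMod 2)) = X * (X + 1) ^ (n - 1) := by
    rw [← Matrix.charpoly_map, hT2, charpoly_one_add_J hn]
  have hmult2 : (T.charpoly.map (Int.castRingHom (ZMod 2))).rootMultiplicity 0 = 1 := by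
    rw [hp2]
    have hx0 : ((X : (ZMod 2)[X]) * (X + 1) ^ (n - 1)) ≠ 0 := by
      apply mul_ne_zero X_ne_zero
      apply pow_ne_zero
      exact (monic_X_add_C (1 : ZMod 2)).ne_zero
    rw [rootMultiplicity_mul hx0]
    have h1 : rootMultiplicity (0 : ZMod 2) X = 1 := by
      rw [show (X : (ZMod 2)[X]) = X - C 0 by simp]
      exact rootMultiplicity_X_sub_C_self
    have h2 : rootMultiplicity (0 : ZMod 2) ((X + 1) ^ (n - 1)) = 0 := by
      apply rootMultiplicity_eq_zero
      simp [IsRoot]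
    rw [h1, h2]
  -- splits over ℝ
  have hsplits : (T.charpoly.map (Int.castRingHom ℝ)).Splits := by
    rw [hpR, hps]
    exact Splits.prod (fun i _ => Splits.X_sub_C _)
  -- existence of an eigenvalue of multiplicity one
  have hex : ∃ θ : ℝ, (T.charpoly.map (Int.castRingHom ℝ)).IsRoot θ ∧
      (T.charpoly.map (Int.castRingHom ℝ)).rootMultiplicity θ = 1 := by
    by_contra hcon
    push_neg at hcon
    exact key_lemma T.charpoly.natDegree T.charpoly le_rfl (Matrix.charpoly_monic T)
      hsplits hcon hmult2
  obtain ⟨θ, hθroot, hθm⟩ := hex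
  rw [hpR, hps, rootMult_prod] at hθm
  obtain ⟨i0, hi0⟩ := Finset.card_eq_one.mp hθm
  have hevi0 : ev i0 = θ := by
    have h := hi0 ▸ Finset.mem_singleton_self i0
    exact (Finset.mem_filter.mp h).2
  have huniq : ∀ i, ev i = θ → i = i0 := by
    intro i hi
    have h : i ∈ Finset.univ.filter (fun i => ev i = θ) :=
      Finset.mem_filter.mpr ⟨Finset.mem_univ i, hi⟩
    rw [hi0] at h
    exact Finset.mem_singleton.mp h
  have hθmem : θ ∈ Finset.univ.image ev :=
    Finset.mem_image.mpr ⟨i0, Finset.mem_univ _, hevi0⟩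
  -- the two other eigenvalues
  have hcard2 : ((Finset.univ.image ev).erase θ).card = 2 := by
    rw [Finset.card_erase_of_mem hθmem, h3]
  obtain ⟨lam, mu, hlm, hpair⟩ := Finset.card_eq_two.mp hcard2
  have hlam_er : lam ∈ (Finset.univ.image ev).erase θ := by
    rw [hpair]; exact Finset.mem_insert_self _ _
  have hmu_er : mu ∈ (Finset.univ.image ev).erase θ := by
    rw [hpair]; exact Finset.mem_insert_of_mem (Finset.mem_singleton_self _)
  have hlam_mem : lam ∈ Finset.univ.image ev := Finset.mem_of_mem_erase hlam_er
  have hmu_mem : mu ∈ Finset.univ.image ev := Finset.mem_of_mem_erase hmu_er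
  have hθlam : θ ≠ lam := fun h => (Finset.mem_erase.mp hlam_er).1 h.symm
  have hθmu : θ ≠ mu := fun h => (Finset.mem_erase.mp hmu_er).1 h.symm
  have hcover : ∀ i, ev i = θ ∨ ev i = lam ∨ ev i = mu := by
    intro i
    have hmem : ev i ∈ Finset.univ.image ev :=
      Finset.mem_image.mpr ⟨i, Finset.mem_univ _, rfl⟩
    by_cases h : ev i = θ
    · exact Or.inl h
    · right
      have h2 : ev i ∈ (Finset.univ.image ev).erase θ := Finset.mem_erase.mpr ⟨h, hmem⟩
      rw [hpair] at h2
      rcases Finset.mem_insert.mp h2 with h3 | h3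
      · exact Or.inl h3
      · exact Or.inr (Finset.mem_singleton.mp h3)
  -- spectral decomposition
  set U : Matrix (Fin n) (Fin n) ℝ := (hH.eigenvectorUnitary : Matrix (Fin n) (Fin n) ℝ)
    with hUdef
  have hU1 : U * star U = 1 := Matrix.mem_unitaryGroup_iff.mp (hH.eigenvectorUnitary).2
  have hU2 : star U * U = 1 := Matrix.mem_unitaryGroup_iff'.mp (hH.eigenvectorUnitary).2
  have hof : (RCLike.ofReal ∘ ev : Fin n → ℝ) = ev := by
    rw [hev, RCLike.ofReal_real_eq_id]; rfl
  have hst : S = U * Matrix.diagonal ev * star U := by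
    have h := hH.spectral_theorem
    rw [hof] at h
    exact h
  set c : ℝ := (θ - lam) * (θ - mu) with hc
  set δ : ℝ := (n : ℝ) - 1 + lam * mu with hδ
  set M := (S - lam • 1) * (S - mu • 1) with hM
  have hfact : ∀ a : ℝ, S - a • 1 = U * Matrix.diagonal (fun i => ev i - a) * star U := by
    intro a
    have hd : Matrix.diagonal (fun i => ev i - a) =
        Matrix.diagonal ev - a • (1 : Matrix (Fin n) (Fin n) ℝ) := by
      ext i j
      by_cases h : i = j
      · subst h
        simp [Matrix.diagonal_apply_eq, Matrix.one_apply_eq]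
      · simp [Matrix.diagonal_apply_ne _ h, Matrix.one_apply_ne h]
    rw [hd, Matrix.mul_sub, Matrix.sub_mul, Matrix.mul_smul, Matrix.smul_mul,
      Matrix.mul_one, hU1, ← hst]
  have hconjmul : ∀ A B : Matrix (Fin n) (Fin n) ℝ,
      (U * A * star U) * (U * B * star U) = U * (A * B) * star U := by
    intro A B
    calc (U * A * star U) * (U * B * star U)
        = U * A * (star U * U) * B * star U := by
          simp only [Matrix.mul_assoc]
      _ = U * (A * B) * star U := by rw [hU2, Matrix.mul_one]; simp only [Matrix.mul_assoc]
  have hMdiag : M = U * Matrix.diagonal (fun i => (ev i - lam) * (ev i - mu)) * star U := by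
    rw [hM, hfact lam, hfact mu, hconjmul, Matrix.diagonal_mul_diagonal]
  have hgeq : (fun i => (ev i - lam) * (ev i - mu)) = (fun i => if i = i0 then c else 0) := by
    funext i
    by_cases h : i = i0
    · subst h
      rw [hevi0, if_pos rfl, hc]
    · rw [if_neg h]
      rcases hcover i with h1 | h1 | h1
      · exact absurd (huniq i h1) h
      · rw [h1]; ring
      · rw [h1]; ring
  -- entries of M
  have hw : ∀ a b, M a b = c * (U a i0 * U b i0) := by
    intro a b
    rw [hMdiag, hgeq]
    rw [Matrix.mul_apply]
    have hterm : ∀ k, (U * Matrix.diagonal (fun i => if i = i0 then c else 0)) a k *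
        (star U) k b = if k = i0 then c * (U a i0 * U b i0) else 0 := by
      intro k
      rw [Matrix.mul_diagonal, Matrix.star_apply, star_trivial]
      by_cases h : k = i0
      · subst h; rw [if_pos rfl, if_pos rfl]; ring
      · rw [if_neg h, if_neg h]; ring
    rw [Finset.sum_congr rfl (fun k _ => hterm k), Finset.sum_ite_eq' Finset.univ i0]
    rw [if_pos (Finset.mem_univ i0)]
  -- diagonal entries of M
  have hdiagM : ∀ a, M a a = δ := by
    intro a
    rw [hM, Matrix.mul_apply]
    have hterm : ∀ k, (S - lam • 1) a k * (S - mu • 1) k a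
        = (if k = a then lam * mu - 1 else 0) + 1 := by
      intro k
      simp only [Matrix.sub_apply, Matrix.smul_apply, smul_eq_mul]
      by_cases h : k = a
      · subst h
        rw [Matrix.one_apply_eq, if_pos rfl, hS.2.1 k]
        ring
      · rw [Matrix.one_apply_ne (fun hh : (a : Fin n) = k => h hh.symm),
          Matrix.one_apply_ne h, if_neg h]
        have hsym : S k a = S a k := by
          conv_lhs => rw [← hS.1]
          rw [Matrix.transpose_apply]
        rcases hS.2.2 a k (fun hh => h hh.symm) with h1 | h1 <;>
          rw [hsym, h1] <;> ring
    rw [Finset.sum_congr rfl (fun k _ => hterm k), Finset.sum_add_distrib,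
      Finset.sum_ite_eq' Finset.univ a, if_pos (Finset.mem_univ a), Finset.sum_const,
      Finset.card_univ, Fintype.card_fin, nsmul_eq_mul, mul_one, hδ]
    push_cast
    ring
  -- column norm
  have hnorm : ∑ k, U k i0 * U k i0 = 1 := by
    have h := congrArg (fun (A : Matrix (Fin n) (Fin n) ℝ) => A i0 i0) hU2
    simp only [Matrix.mul_apply, Matrix.star_apply, star_trivial, Matrix.one_apply_eq] at h
    exact h
  have hcδ : c = n * δ := by
    have h1 : ∑ k, M k k = c := by
      rw [Finset.sum_congr rfl (fun k _ => hw k k), ← Finset.mul_sum, hnorm, mul_one]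
    have h2 : ∑ k, M k k = n * δ := by
      rw [Finset.sum_congr rfl (fun k _ => hdiagM k), Finset.sum_const,
        Finset.card_univ, Fintype.card_fin, nsmul_eq_mul]
    rw [← h1, h2]
  have hc0 : c ≠ 0 :=
    mul_ne_zero (sub_ne_zero.mpr hθlam) (sub_ne_zero.mpr hθmu)
  have hδ0 : δ ≠ 0 := fun h => hc0 (by rw [hcδ, h, mul_zero])
  have hn0 : (n : ℝ) ≠ 0 := Nat.cast_ne_zero.mpr (by omega)
  have hwsq : ∀ a, U a i0 * U a i0 = 1 / n := by
    intro a
    have h1 : c * (U a i0 * U a i0) = δ := by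
      rw [← hw a a, hdiagM a]
    rw [hcδ] at h1
    have h2 : δ * ((n : ℝ) * (U a i0 * U a i0) - 1) = 0 := by linear_combination h1
    rcases mul_eq_zero.mp h2 with h | h
    · exact absurd h hδ0
    · field_simp
      linarith
  -- signs
  set ε : ℝ := if 0 < c then 1 else -1 with hε
  set d : Fin n → ℝ := fun a => if 0 < U a i0 then 1 else -1 with hd
  have hwne : ∀ a, U a i0 ≠ 0 := by
    intro a h
    have := hwsq a
    rw [h, mul_zero] at this
    exact (one_div_ne_zero hn0) this.symm
  have hεc : ε * c = |c| := by
    by_cases h : 0 < c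
    · rw [hε, if_pos h, one_mul, abs_of_pos h]
    · rw [hε, if_neg h, abs_of_neg (lt_of_le_of_ne (not_lt.mp h) hc0)]
      ring
  have hdw : ∀ a, d a * U a i0 = |U a i0| := by
    intro a
    by_cases h : 0 < U a i0
    · rw [hd]; simp only []; rw [if_pos h, one_mul, abs_of_pos h]
    · rw [hd]; simp only []; rw [if_neg h,
        abs_of_neg (lt_of_le_of_ne (not_lt.mp h) (hwne a))]
      ring
  have hdd : ∀ a, d a * d a = 1 := by
    intro a
    rw [hd]
    by_cases h : 0 < U a i0 <;> simp [h]
  have habs : ∀ a b, |U a i0| * |U b i0| = 1 / n := by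
    intro a b
    have h1 : ∀ x : Fin n, |U x i0| = Real.sqrt (1 / n) := by
      intro x
      rw [← Real.sqrt_sq_eq_abs, sq, hwsq x]
    rw [h1 a, h1 b, Real.mul_self_sqrt (by positivity)]
  have hcabs : |c| = n * |δ| := by
    rw [hcδ, abs_mul, Nat.abs_cast]
  -- the key entrywise formula
  have hEnt : ∀ a b, (ε • M) a b = |δ| * (d a * d b) := by
    intro a b
    rw [Matrix.smul_apply, hw a b, smul_eq_mul]
    calc ε * (c * (U a i0 * U b i0))
        = (ε * c) * (U a i0 * U b i0) := by ring
      _ = |c| * (((d a * d a) * U a i0) * ((d b * d b) * U b i0)) := by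
          rw [hεc, hdd a, hdd b]; ring
      _ = |c| * ((d a * d b) * ((d a * U a i0) * (d b * U b i0))) := by ring
      _ = |c| * ((d a * d b) * (|U a i0| * |U b i0|)) := by rw [hdw a, hdw b]
      _ = ((n : ℝ) * |δ|) * ((d a * d b) * (1 / n)) := by rw [habs a b, hcabs]
      _ = |δ| * (d a * d b) := by field_simp
  refine ⟨lam, mu, hlm, hlam_mem, hmu_mem, ε, ?_, ?_, ?_⟩
  · by_cases h : 0 < c
    · left; rw [hε, if_pos h]
    · right; rw [hε, if_neg h]
  · -- positive semidefiniteness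
    rw [Matrix.posSemidef_iff_dotProduct_mulVec]
    constructor
    · show (ε • M)ᴴ = ε • M
      ext a b
      rw [Matrix.conjTranspose_apply, star_trivial, hEnt a b, hEnt b a]
      ring
    · intro x
      have hsx : star x = x := by funext a; simp
      have hval : dotProduct (star x) ((ε • M) *ᵥ x)
          = |δ| * ((∑ a, d a * x a) * (∑ b, d b * x b)) := by
        rw [hsx, dotProduct]
        have h1 : ∀ a, x a * ((ε • M) *ᵥ x) a
            = ∑ b, |δ| * ((d a * x a) * (d b * x b)) := by
          intro a
          rw [Matrix.mulVec, dotProduct, Finset.mul_sum]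
          apply Finset.sum_congr rfl
          intro b _
          rw [hEnt a b]
          ring
        rw [Finset.sum_congr rfl (fun a _ => h1 a)]
        rw [Finset.sum_mul_sum]
        rw [Finset.mul_sum]
        apply Finset.sum_congr rfl
        intro a _
        rw [Finset.mul_sum]
      rw [hval]
      have := mul_self_nonneg (∑ a, d a * x a)
      have habs0 := abs_nonneg δ
      nlinarith
  · -- switching equivalence
    refine ⟨d, Equiv.refl _, fun i => by
      rw [hd]
      by_cases h : 0 < U i i0
      · left; simp [h]
      · right; simp [h], ?_⟩
    ext a b
    have hP : ∀ i j, signedPerm d (Equiv.refl (Fin n)) i j = if j = i then d i else 0 := by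
      intro i j; rfl
    rw [Matrix.mul_apply]
    have hterm : ∀ l, ((signedPerm d (Equiv.refl (Fin n)))ᵀ * (|δ| • JmatR n)) a l *
        signedPerm d (Equiv.refl (Fin n)) l b
          = if l = b then d a * |δ| * d b else 0 := by
      intro l
      have hrow : ((signedPerm d (Equiv.refl (Fin n)))ᵀ * (|δ| • JmatR n)) a l
          = d a * |δ| := by
        rw [Matrix.mul_apply]
        have h1 : ∀ k, (signedPerm d (Equiv.refl (Fin n)))ᵀ a k * (|δ| • JmatR n) k l
            = if k = a then d a * |δ| else 0 := by
          intro k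
          rw [Matrix.transpose_apply, hP, Matrix.smul_apply, JmatR, smul_eq_mul]
          by_cases h : k = a
          · subst h; rw [if_pos rfl, if_pos rfl]
            simp [mul_comm]
          · rw [if_neg (fun hh : (a : Fin n) = k => h hh.symm), if_neg h]
            ring
        rw [Finset.sum_congr rfl (fun k _ => h1 k), Finset.sum_ite_eq' Finset.univ a,
          if_pos (Finset.mem_univ a)]
      rw [hrow, hP]
      by_cases h : l = b
      · subst h; rw [if_pos rfl, if_pos rfl]
      · rw [if_neg (fun hh : (b : Fin n) = l => h hh.symm), if_neg h]
        ring
    rw [Finset.sum_congr rfl (fun l _ => hterm l), Finset.sum_ite_eq' Finset.univ b,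
      if_pos (Finset.mem_univ b), hEnt a b]
    ring
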